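/- Let ABC be a triangle with all angles less than 120°, F its Fermat point (where all three angles ∠AFB, ∠BFC, ∠CFA equal 120°), and Z a closed disk containing F. Then F maximizes the minimum of the three angles min(∠AQB, ∠BQC, ∠CQA) over all points Q in Z; in fact over all points Q in the plane, min(∠AQB, ∠BQC, ∠CQA) ≤ 120° with equality iff Q = F. -/

import Mathlib

open EuclideanGeometry Real

abbrev Pt := EuclideanSpace ℝ (Fin 2)

noncomputable def un (x : Pt) : Pt := ‖x‖⁻¹ • x

lemma norm_un {x : Pt} (hx : x ≠ 0) : ‖un x‖ = 1 := by
  simp [un, norm_smul, inv_mul_cancel₀ (norm_ne_zero_iff.mpr hx)]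

lemma inner_un_eq {x y : Pt} :
    inner ℝ (un x) (un y) = Real.cos (InnerProductGeometry.angle x y) := by
  rw [InnerProductGeometry.cos_angle]
  simp [un, real_inner_smul_left, real_inner_smul_right, div_eq_mul_inv]
  ring

lemma normsq_sum (x y z : Pt) (hx : x ≠ 0) (hy : y ≠ 0) (hz : z ≠ 0) :
    ‖un x + un y + un z‖ ^ 2 =
      3 + 2 * (Real.cos (InnerProductGeometry.angle x y)
        + Real.cos (InnerProductGeometry.angle y z)
        + Real.cos (InnerProductGeometry.angle z x)) := by
  have h : ‖un x + un y + un z‖ ^ 2 = inner ℝ (un x + un y + un z) (un x + un y + un z) := by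
    rw [real_inner_self_eq_norm_sq]
  rw [h]
  simp only [inner_add_left, inner_add_right]
  rw [real_inner_self_eq_norm_sq, real_inner_self_eq_norm_sq, real_inner_self_eq_norm_sq,
    norm_un hx, norm_un hy, norm_un hz]
  rw [real_inner_comm (un y) (un x), real_inner_comm (un z) (un x),
    real_inner_comm (un z) (un y)]
  rw [inner_un_eq, inner_un_eq, inner_un_eq]
  rw [InnerProductGeometry.angle_comm y x, InnerProductGeometry.angle_comm z y]
  ring

lemma cos_2pi3 : Real.cos (2 * π / 3) = -(1/2) := by
  have : (2 : ℝ) * π / 3 = π - π / 3 := by ring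
  rw [this, Real.cos_pi_sub, Real.cos_pi_div_three]


lemma min_le_2pi3 {x y z : Pt} (hx : x ≠ 0) (hy : y ≠ 0) (hz : z ≠ 0) :
    min (InnerProductGeometry.angle x y)
      (min (InnerProductGeometry.angle y z) (InnerProductGeometry.angle z x)) ≤ 2 * π / 3 := by
  by_contra h
  push_neg at h
  have h1 : 2 * π / 3 < InnerProductGeometry.angle x y := lt_of_lt_of_le h (min_le_left _ _)
  have h2 : 2 * π / 3 < InnerProductGeometry.angle y z :=
    lt_of_lt_of_le h ((min_le_right _ _).trans (min_le_left _ _))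
  have h3 : 2 * π / 3 < InnerProductGeometry.angle z x :=
    lt_of_lt_of_le h ((min_le_right _ _).trans (min_le_right _ _))
  have key : ∀ a : ℝ, 2 * π / 3 < a → a ≤ π → Real.cos a < -(1/2) := by
    intro a ha hap
    rw [← cos_2pi3]
    apply Real.cos_lt_cos_of_nonneg_of_le_pi _ hap ha
    positivity
  have c1 := key _ h1 (InnerProductGeometry.angle_le_pi x y)
  have c2 := key _ h2 (InnerProductGeometry.angle_le_pi y z)
  have c3 := key _ h3 (InnerProductGeometry.angle_le_pi z x)
  have hn := normsq_sum x y z hx hy hz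
  nlinarith [sq_nonneg ‖un x + un y + un z‖]

lemma eq_sum_zero {x y z : Pt} (hx : x ≠ 0) (hy : y ≠ 0) (hz : z ≠ 0)
    (h : min (InnerProductGeometry.angle x y)
      (min (InnerProductGeometry.angle y z) (InnerProductGeometry.angle z x)) = 2 * π / 3) :
    un x + un y + un z = 0 := by
  have h1 : 2 * π / 3 ≤ InnerProductGeometry.angle x y := h ▸ min_le_left _ _
  have h2 : 2 * π / 3 ≤ InnerProductGeometry.angle y z :=
    h ▸ ((min_le_right _ _).trans (min_le_left _ _))
  have h3 : 2 * π / 3 ≤ InnerProductGeometry.angle z x :=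
    h ▸ ((min_le_right _ _).trans (min_le_right _ _))
  have key : ∀ a : ℝ, 2 * π / 3 ≤ a → a ≤ π → Real.cos a ≤ -(1/2) := by
    intro a ha hap
    rw [← cos_2pi3]
    apply Real.cos_le_cos_of_nonneg_of_le_pi _ hap ha
    positivity
  have c1 := key _ h1 (InnerProductGeometry.angle_le_pi x y)
  have c2 := key _ h2 (InnerProductGeometry.angle_le_pi y z)
  have c3 := key _ h3 (InnerProductGeometry.angle_le_pi z x)
  have hn := normsq_sum x y z hx hy hz
  have : ‖un x + un y + un z‖ ^ 2 ≤ 0 := by linarith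
  have : ‖un x + un y + un z‖ = 0 := by nlinarith [norm_nonneg (un x + un y + un z)]
  exact norm_eq_zero.mp this

lemma mono_key {x y : Pt} (hx : x ≠ 0) (hy : y ≠ 0) :
    0 ≤ @inner ℝ _ _ (un x - un y) (x - y) ∧
    ((@inner ℝ _ _ (un x - un y) (x - y) : ℝ) = 0 → un x = un y) := by
  have hxn : (0:ℝ) < ‖x‖ := norm_pos_iff.mpr hx
  have hyn : (0:ℝ) < ‖y‖ := norm_pos_iff.mpr hy
  have e1 : (@inner ℝ _ _ (un x) x : ℝ) = ‖x‖ := by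
    rw [un, real_inner_smul_left, real_inner_self_eq_norm_sq]
    field_simp
  have e2 : (@inner ℝ _ _ (un y) y : ℝ) = ‖y‖ := by
    rw [un, real_inner_smul_left, real_inner_self_eq_norm_sq]
    field_simp
  have e3 : (@inner ℝ _ _ (un x) y : ℝ) = ‖y‖ * @inner ℝ _ _ (un x) (un y) := by
    rw [un, un, real_inner_smul_left, real_inner_smul_left, real_inner_smul_right]
    field_simp
  have e4 : (@inner ℝ _ _ (un y) x : ℝ) = ‖x‖ * @inner ℝ _ _ (un x) (un y) := by
    rw [un, un, real_inner_smul_left, real_inner_smul_left, real_inner_smul_right,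
      real_inner_comm y x]
    field_simp
  have hinner : (@inner ℝ _ _ (un x - un y) (x - y) : ℝ)
      = (‖x‖ + ‖y‖) * (1 - @inner ℝ _ _ (un x) (un y)) := by
    rw [inner_sub_left, inner_sub_right, inner_sub_right, e1, e2, e3, e4]
    ring
  have hcs : (@inner ℝ _ _ (un x) (un y) : ℝ) ≤ 1 := by
    calc (@inner ℝ _ _ (un x) (un y) : ℝ) ≤ ‖un x‖ * ‖un y‖ := real_inner_le_norm _ _
    _ = 1 := by rw [norm_un hx, norm_un hy]; ring
  have hnn : (0:ℝ) < ‖x‖ + ‖y‖ := by linarith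
  constructor
  · rw [hinner]; nlinarith
  · intro h0
    rw [hinner] at h0
    have h1 : (@inner ℝ _ _ (un x) (un y) : ℝ) = 1 := by
      rcases mul_eq_zero.mp h0 with h | h
      · linarith
      · linarith
    have hu : ‖un x - un y‖ ^ 2 = 0 := by
      rw [← real_inner_self_eq_norm_sq, inner_sub_left, inner_sub_right, inner_sub_right,
        real_inner_self_eq_norm_sq, real_inner_self_eq_norm_sq,
        norm_un hx, norm_un hy]
      have hc := real_inner_comm (un y) (un x)
      linarith
    have := norm_eq_zero.mp (by nlinarith [norm_nonneg (un x - un y)] : ‖un x - un y‖ = 0)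
    exact sub_eq_zero.mp this

lemma line_pt {X Q F : Pt} (hQF : F - Q ≠ 0) (hx : X - Q ≠ 0) (hx' : X - F ≠ 0)
    (h : un (X - Q) = un (X - F)) : ∃ t : ℝ, X = t • (F - Q) +ᵥ F := by
  have hxe : X - Q = (‖X - Q‖ * ‖X - F‖⁻¹) • (X - F) := by
    have := congrArg (fun v : Pt => ‖X - Q‖ • v) h
    simp only [un, smul_smul] at this
    rw [mul_inv_cancel₀ (norm_ne_zero_iff.mpr hx), one_smul] at this
    exact this
  set c : ℝ := ‖X - Q‖ * ‖X - F‖⁻¹ with hc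
  have hFQ : F - Q = (c - 1) • (X - F) := by
    have : F - Q = (X - Q) - (X - F) := by abel
    rw [this, hxe, sub_smul, one_smul]
  have hc1 : c - 1 ≠ 0 := by
    intro h0
    rw [h0, zero_smul] at hFQ
    exact hQF hFQ
  refine ⟨(c - 1)⁻¹, ?_⟩
  have : X - F = (c - 1)⁻¹ • (F - Q) := by
    rw [hFQ, smul_smul, inv_mul_cancel₀ hc1, one_smul]
  have : X = (c - 1)⁻¹ • (F - Q) + F := by
    rw [← this]; abel
  simpa using this

lemma unique_pt {A B C Q F : Pt} (hncol : ¬ Collinear ℝ ({A, B, C} : Set Pt))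
    (hAQ : A - Q ≠ 0) (hBQ : B - Q ≠ 0) (hCQ : C - Q ≠ 0)
    (hAF : A - F ≠ 0) (hBF : B - F ≠ 0) (hCF : C - F ≠ 0)
    (hQ : un (A - Q) + un (B - Q) + un (C - Q) = 0)
    (hF : un (A - F) + un (B - F) + un (C - F) = 0) : Q = F := by
  by_contra hQF
  have hd : F - Q ≠ 0 := sub_ne_zero.mpr (Ne.symm hQF)
  have hsub : ∀ X : Pt, (X - Q) - (X - F) = F - Q := fun X => by abel
  have hsum : (@inner ℝ _ _ (un (A - Q) - un (A - F)) ((A - Q) - (A - F)) : ℝ)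
      + @inner ℝ _ _ (un (B - Q) - un (B - F)) ((B - Q) - (B - F))
      + @inner ℝ _ _ (un (C - Q) - un (C - F)) ((C - Q) - (C - F)) = 0 := by
    rw [hsub A, hsub B, hsub C, ← inner_add_left, ← inner_add_left]
    have : un (A - Q) - un (A - F) + (un (B - Q) - un (B - F)) + (un (C - Q) - un (C - F))
        = (un (A - Q) + un (B - Q) + un (C - Q)) - (un (A - F) + un (B - F) + un (C - F)) := by
      abel
    rw [this, hQ, hF, sub_zero, inner_zero_left]
  have m1 := mono_key hAQ hAF
  have m2 := mono_key hBQ hBF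
  have m3 := mono_key hCQ hCF
  have e1 : un (A - Q) = un (A - F) := m1.2 (by linarith [m1.1, m2.1, m3.1])
  have e2 : un (B - Q) = un (B - F) := m2.2 (by linarith [m1.1, m2.1, m3.1])
  have e3 : un (C - Q) = un (C - F) := m3.2 (by linarith [m1.1, m2.1, m3.1])
  apply hncol
  rw [collinear_iff_exists_forall_eq_smul_vadd]
  refine ⟨F, F - Q, ?_⟩
  intro p hp
  rcases hp with rfl | rfl | rfl
  · exact line_pt hd hAQ hAF e1
  · exact line_pt hd hBQ hBF e2
  · exact line_pt hd hCQ hCF e3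

lemma angle_eq' (p1 p2 p3 : Pt) :
    ∠ p1 p2 p3 = InnerProductGeometry.angle (p1 - p2) (p3 - p2) := rfl

/-- If all angles of triangle `ABC` are less than `120°`, `F` is the Fermat
point (all three angles at `F` equal `120°`), and `Z` is a closed disk
containing `F`, then `F` maximizes `Q ↦ min(∠AQB, ∠BQC, ∠CQA)` over `Z`;
in fact for every point `Q ∉ {A, B, C}` the minimum is at most `120°`,
with equality iff `Q = F`. -/
theorem stmt7 (A B C F P : Pt) (r : ℝ) (hr : 0 < r)
    (hncol : ¬ Collinear ℝ ({A, B, C} : Set Pt))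
    (hA : ∠ B A C < 2 * π / 3) (hB : ∠ A B C < 2 * π / 3)
    (hC : ∠ B C A < 2 * π / 3)
    (hF1 : ∠ A F B = 2 * π / 3) (hF2 : ∠ B F C = 2 * π / 3)
    (hF3 : ∠ C F A = 2 * π / 3)
    (hFZ : F ∈ Metric.closedBall P r) :
    (∀ Q ∈ Metric.closedBall P r, Q ≠ A → Q ≠ B → Q ≠ C →
      min (∠ A Q B) (min (∠ B Q C) (∠ C Q A)) ≤
        min (∠ A F B) (min (∠ B F C) (∠ C F A))) ∧
    (∀ Q : Pt, Q ≠ A → Q ≠ B → Q ≠ C →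
      min (∠ A Q B) (min (∠ B Q C) (∠ C Q A)) ≤ 2 * π / 3 ∧
      (min (∠ A Q B) (min (∠ B Q C) (∠ C Q A)) = 2 * π / 3 ↔ Q = F)) := by
  have hpi := Real.pi_pos
  -- F is distinct from the vertices
  have hAF : A - F ≠ 0 := by
    intro h
    rw [angle_eq', h, InnerProductGeometry.angle_zero_left] at hF1
    linarith
  have hBF : B - F ≠ 0 := by
    intro h
    rw [angle_eq', h, InnerProductGeometry.angle_zero_left] at hF2
    linarith
  have hCF : C - F ≠ 0 := by
    intro h
    rw [angle_eq', h, InnerProductGeometry.angle_zero_left] at hF3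
    linarith
  -- the unit vectors at F sum to zero
  have hFsum : un (A - F) + un (B - F) + un (C - F) = 0 := by
    apply eq_sum_zero hAF hBF hCF
    rw [← angle_eq', ← angle_eq', ← angle_eq', hF1, hF2, hF3, min_self, min_self]
  have part2 : ∀ Q : Pt, Q ≠ A → Q ≠ B → Q ≠ C →
      min (∠ A Q B) (min (∠ B Q C) (∠ C Q A)) ≤ 2 * π / 3 ∧
      (min (∠ A Q B) (min (∠ B Q C) (∠ C Q A)) = 2 * π / 3 ↔ Q = F) := by
    intro Q hQA hQB hQC
    have hAQ : A - Q ≠ 0 := sub_ne_zero.mpr (Ne.symm hQA)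
    have hBQ : B - Q ≠ 0 := sub_ne_zero.mpr (Ne.symm hQB)
    have hCQ : C - Q ≠ 0 := sub_ne_zero.mpr (Ne.symm hQC)
    constructor
    · rw [angle_eq' A Q B, angle_eq' B Q C, angle_eq' C Q A]
      exact min_le_2pi3 hAQ hBQ hCQ
    · constructor
      · intro h
        rw [angle_eq' A Q B, angle_eq' B Q C, angle_eq' C Q A] at h
        have hQsum := eq_sum_zero hAQ hBQ hCQ h
        exact unique_pt hncol hAQ hBQ hCQ hAF hBF hCF hQsum hFsum
      · rintro rfl
        rw [hF1, hF2, hF3, min_self, min_self]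
  refine ⟨?_, part2⟩
  intro Q _ hQA hQB hQC
  rw [hF1, hF2, hF3, min_self, min_self]
  exact (part2 Q hQA hQB hQC).1
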